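/- arXiv:2402.05632 — 2 statements merged into one kernel-verified Lean document; each statement's English description precedes it below -/
import Mathlib

section
/- Let Y_1,…,Y_n be independent real random variables with E(Y_k)=0, E(Y_k²)=σ_k², E(|Y_k|³)<∞ and Σ_{k=1}^n σ_k² = 1. Then for all t ∈ ℝ, |E(e^{itΣ_{k=1}^n Y_k}) − e^{−t²/2}| ≤ (|t|³/6) Σ_{k=1}^n E(|Y_k|³) + (t⁴/8) Σ_{k=1}^n σ_k⁴. -/
open MeasureTheory ProbabilityTheory

section Aux

lemma hasDerivAt_expI (x : ℝ) :
    HasDerivAt (fun y : ℝ => Complex.exp (Complex.I * y))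
      (Complex.I * Complex.exp (Complex.I * x)) x := by
  have h1 : HasDerivAt (fun z : ℂ => Complex.exp (Complex.I * z))
      (Complex.I * Complex.exp (Complex.I * (x : ℂ))) (x : ℂ) := by
    have h2 := (Complex.hasDerivAt_exp (Complex.I * x)).comp (x : ℂ)
      ((hasDerivAt_id (x : ℂ)).const_mul Complex.I)
    simp only [Function.comp_def] at h2
    exact h2.congr_deriv (by ring)
  exact h1.comp_ofReal

lemma hasDerivAt_coeR (x : ℝ) : HasDerivAt (fun y : ℝ => (y : ℂ)) 1 x :=
  (hasDerivAt_id (x : ℂ)).comp_ofReal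

lemma step_bound {f f' : ℝ → ℂ} (hd : ∀ s, HasDerivAt f (f' s) s)
    (hc : Continuous f') (h0 : f 0 = 0) {g : ℝ → ℝ} (hg : Continuous g)
    (hb : ∀ s, 0 ≤ s → ‖f' s‖ ≤ g s) {x : ℝ} (hx : 0 ≤ x) :
    ‖f x‖ ≤ ∫ s in (0:ℝ)..x, g s := by
  have hfx : f x = ∫ s in (0:ℝ)..x, f' s := by
    rw [intervalIntegral.integral_eq_sub_of_hasDerivAt (fun s _ => hd s)
      (hc.intervalIntegrable _ _), h0, sub_zero]
  rw [hfx]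
  calc ‖∫ s in (0:ℝ)..x, f' s‖ ≤ ∫ s in (0:ℝ)..x, ‖f' s‖ :=
        intervalIntegral.norm_integral_le_integral_norm hx
    _ ≤ ∫ s in (0:ℝ)..x, g s := by
        apply intervalIntegral.integral_mono_on hx
          ((hc.norm).intervalIntegrable _ _) (hg.intervalIntegrable _ _)
        intro s hs; exact hb s hs.1

lemma norm_g0 {x : ℝ} (hx : 0 ≤ x) : ‖Complex.exp (Complex.I * x) - 1‖ ≤ x := by
  have h := step_bound (f := fun y : ℝ => Complex.exp (Complex.I * y) - 1)
    (f' := fun s : ℝ => Complex.I * Complex.exp (Complex.I * s))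
    (fun s => (hasDerivAt_expI s).sub_const 1)
    (by continuity) (by simp) (g := fun _ => (1:ℝ)) continuous_const
    (fun s _ => by simp [Complex.norm_exp]) hx
  simpa using h

open intervalIntegral in
lemma norm_g1 {x : ℝ} (hx : 0 ≤ x) :
    ‖Complex.exp (Complex.I * x) - 1 - Complex.I * x‖ ≤ x ^ 2 / 2 := by
  have hd : ∀ s : ℝ, HasDerivAt (fun y : ℝ => Complex.exp (Complex.I * y) - 1 - Complex.I * y)
      (Complex.I * (Complex.exp (Complex.I * s) - 1)) s := by
    intro s
    have := ((hasDerivAt_expI s).sub_const 1).sub ((hasDerivAt_coeR s).const_mul Complex.I)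
    exact this.congr_deriv (by ring)
  have h := step_bound (fun s => hd s) (by continuity) (by simp)
    (g := fun s => s) continuous_id
    (fun s hs => by
      rw [norm_mul, Complex.norm_I, one_mul]; exact norm_g0 hs) hx
  rw [integral_id] at h
  simpa using h

open intervalIntegral in
lemma norm_g2 {x : ℝ} (hx : 0 ≤ x) :
    ‖Complex.exp (Complex.I * x) - 1 - Complex.I * x + (x : ℂ) ^ 2 / 2‖ ≤ x ^ 3 / 6 := by
  have hd : ∀ s : ℝ, HasDerivAt
      (fun y : ℝ => Complex.exp (Complex.I * y) - 1 - Complex.I * y + (y : ℂ) * (y : ℂ) / 2)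
      (Complex.I * (Complex.exp (Complex.I * s) - 1 - Complex.I * s)) s := by
    intro s
    have := (((hasDerivAt_expI s).sub_const 1).sub
      ((hasDerivAt_coeR s).const_mul Complex.I)).add
      ((((hasDerivAt_coeR s).mul (hasDerivAt_coeR s))).div_const 2)
    exact this.congr_deriv (by linear_combination (s : ℂ) * Complex.I_sq)
  have h := step_bound (fun s => hd s) (by continuity) (by simp)
    (g := fun s => s ^ 2 / 2) (by continuity)
    (fun s hs => by
      rw [norm_mul, Complex.norm_I, one_mul]; exact norm_g1 hs) hx
  rw [intervalIntegral.integral_div] at h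
  rw [integral_pow] at h
  norm_num at h
  rw [sq (x:ℂ)]
  convert h using 1
  ring

lemma taylor_expI (x : ℝ) :
    ‖Complex.exp (Complex.I * x) - 1 - Complex.I * x + (x : ℂ) ^ 2 / 2‖ ≤ |x| ^ 3 / 6 := by
  rcases le_or_gt 0 x with hx | hx
  · rw [_root_.abs_of_nonneg hx]; exact norm_g2 hx
  · have h := norm_g2 (x := -x) (by linarith)
    rw [_root_.abs_of_neg hx]
    have hconj : Complex.exp (Complex.I * (-x : ℝ)) - 1 - Complex.I * (-x : ℝ)
        + ((-x : ℝ) : ℂ) ^ 2 / 2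
        = (starRingEnd ℂ) (Complex.exp (Complex.I * x) - 1 - Complex.I * x + (x : ℂ) ^ 2 / 2) := by
      simp only [map_add, map_sub, map_div₀, map_pow, map_mul, map_one, Complex.conj_I,
        Complex.conj_ofReal, ← Complex.exp_conj, map_ofNat]
      push_cast
      ring_nf
    rw [hconj, RCLike.norm_conj] at h
    exact h

lemma real_exp_taylor {u : ℝ} (hu : 0 ≤ u) : |Real.exp (-u) - (1 - u)| ≤ u ^ 2 / 2 := by
  have low : 1 - u ≤ Real.exp (-u) := by
    have := Real.add_one_le_exp (-u); linarith
  have hd : ∀ s : ℝ, HasDerivAt (fun s : ℝ => 1 - s + s * s / 2 - Real.exp (-s))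
      (-1 + s + Real.exp (-s)) s := by
    intro s
    have h1 : HasDerivAt (fun s : ℝ => Real.exp (-s)) (-Real.exp (-s)) s := by
      have := (Real.hasDerivAt_exp (-s)).comp s ((hasDerivAt_id s).neg)
      simp at this; exact this
    have h2 := (((hasDerivAt_const s (1:ℝ)).sub (hasDerivAt_id s)).add
      (((hasDerivAt_id s).mul (hasDerivAt_id s)).div_const 2)).sub h1
    exact h2.congr_deriv (by simp only [id_eq]; ring)
  have hint : IntervalIntegrable (fun s : ℝ => -1 + s + Real.exp (-s)) volume 0 u := by
    apply Continuous.intervalIntegrable; continuity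
  have h0 : (0:ℝ) ≤ ∫ s in (0:ℝ)..u, (-1 + s + Real.exp (-s)) := by
    apply intervalIntegral.integral_nonneg hu
    intro s hs
    have := Real.add_one_le_exp (-s); linarith
  rw [intervalIntegral.integral_eq_sub_of_hasDerivAt (fun s _ => hd s) hint] at h0
  norm_num [Real.exp_zero] at h0
  rw [abs_le]
  constructor <;> nlinarith [h0]

lemma prod_sub_prod_le {ι : Type*} (s : Finset ι) (f g : ι → ℂ)
    (hf : ∀ i, ‖f i‖ ≤ 1) (hg : ∀ i, ‖g i‖ ≤ 1) :
    ‖∏ i ∈ s, f i - ∏ i ∈ s, g i‖ ≤ ∑ i ∈ s, ‖f i - g i‖ := by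
  classical
  induction s using Finset.cons_induction with
  | empty => simp
  | cons i s hi ih =>
    rw [Finset.prod_cons, Finset.prod_cons, Finset.sum_cons]
    have key : f i * ∏ j ∈ s, f j - g i * ∏ j ∈ s, g j
        = (f i - g i) * ∏ j ∈ s, g j + f i * (∏ j ∈ s, f j - ∏ j ∈ s, g j) := by ring
    rw [key]
    have h1 : ‖(f i - g i) * ∏ j ∈ s, g j‖ ≤ ‖f i - g i‖ := by
      rw [norm_mul]
      have : ‖∏ j ∈ s, g j‖ ≤ 1 := by
        rw [norm_prod]
        exact Finset.prod_le_one (fun j _ => norm_nonneg _) (fun j _ => hg j)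
      nlinarith [norm_nonneg (f i - g i)]
    have h2 : ‖f i * (∏ j ∈ s, f j - ∏ j ∈ s, g j)‖ ≤ ∑ j ∈ s, ‖f j - g j‖ := by
      rw [norm_mul]
      calc ‖f i‖ * ‖∏ j ∈ s, f j - ∏ j ∈ s, g j‖ ≤ 1 * ‖∏ j ∈ s, f j - ∏ j ∈ s, g j‖ := by
            apply mul_le_mul_of_nonneg_right (hf i) (norm_nonneg _)
        _ ≤ ∑ j ∈ s, ‖f j - g j‖ := by rw [one_mul]; exact ih
    calc ‖_ + _‖ ≤ _ + _ := norm_add_le _ _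
      _ ≤ ‖f i - g i‖ + ∑ j ∈ s, ‖f j - g j‖ := add_le_add h1 h2

lemma indep_integral_mul {Ω : Type*} [MeasurableSpace Ω] (μ : Measure Ω)
    [IsProbabilityMeasure μ] {A B : Ω → ℝ} (hA : Measurable A) (hB : Measurable B)
    (h : IndepFun A B μ) {f g : ℝ → ℂ} (hf : Measurable f) (hg : Measurable g) :
    ∫ ω, f (A ω) * g (B ω) ∂μ = (∫ ω, f (A ω) ∂μ) * ∫ ω, g (B ω) ∂μ := by
  haveI : IsProbabilityMeasure (μ.map A) := Measure.isProbabilityMeasure_map hA.aemeasurable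
  haveI : IsProbabilityMeasure (μ.map B) := Measure.isProbabilityMeasure_map hB.aemeasurable
  have hmap := (indepFun_iff_map_prod_eq_prod_map_map hA.aemeasurable hB.aemeasurable).mp h
  have h1 : ∫ ω, f (A ω) * g (B ω) ∂μ
      = ∫ p : ℝ × ℝ, f p.1 * g p.2 ∂(μ.map (fun ω => (A ω, B ω))) := by
    have hm : AEStronglyMeasurable (fun p : ℝ × ℝ => f p.1 * g p.2)
        (μ.map (fun ω => (A ω, B ω))) :=
      ((hf.comp measurable_fst).mul (hg.comp measurable_snd)).aestronglyMeasurable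
    rw [integral_map (hA.prodMk hB).aemeasurable hm]
  rw [h1, hmap, integral_prod_mul, integral_map hA.aemeasurable hf.aestronglyMeasurable,
    integral_map hB.aemeasurable hg.aestronglyMeasurable]

lemma measurable_expI (t : ℝ) : Measurable (fun x : ℝ => Complex.exp (Complex.I * t * x)) :=
  Complex.measurable_exp.comp (Complex.measurable_ofReal.const_mul (Complex.I * t))

lemma charFun_sum {Ω : Type*} [MeasurableSpace Ω] (μ : Measure Ω) [IsProbabilityMeasure μ]
    {ι : Type*} {Y : ι → Ω → ℝ} (hmeas : ∀ k, Measurable (Y k))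
    (hindep : iIndepFun Y μ) (t : ℝ) (s : Finset ι) :
    ∫ ω, Complex.exp (Complex.I * t * ((∑ k ∈ s, Y k ω : ℝ) : ℂ)) ∂μ
      = ∏ k ∈ s, ∫ ω, Complex.exp (Complex.I * t * ((Y k ω : ℝ) : ℂ)) ∂μ := by
  classical
  induction s using Finset.cons_induction with
  | empty => simp
  | cons i s hi ih =>
    rw [Finset.prod_cons, ← ih]
    have hB : Measurable (fun ω => ∑ k ∈ s, Y k ω) := by
      apply Finset.measurable_sum; exact fun k _ => hmeas k
    have hInd : IndepFun (Y i) (fun ω => ∑ k ∈ s, Y k ω) μ := by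
      have h2 := (hindep.indepFun_finsetSum_of_notMem hmeas hi).symm
      have he : (fun ω => ∑ k ∈ s, Y k ω) = ∑ j ∈ s, Y j := by
        ext ω; simp [Finset.sum_apply]
      rw [he]; exact h2
    have key : ∀ ω, Complex.exp (Complex.I * t * ((∑ k ∈ Finset.cons i s hi, Y k ω : ℝ) : ℂ))
        = (fun x : ℝ => Complex.exp (Complex.I * t * x)) (Y i ω)
          * (fun x : ℝ => Complex.exp (Complex.I * t * x)) (∑ k ∈ s, Y k ω) := by
      intro ω
      simp only [Finset.sum_cons]
      push_cast
      rw [mul_add, Complex.exp_add]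
    simp only [key]
    exact indep_integral_mul μ (hmeas i) hB hInd (measurable_expI t) (measurable_expI t)

lemma charFun_term_bound {Ω : Type*} [MeasurableSpace Ω] (μ : Measure Ω)
    [IsProbabilityMeasure μ] {Z : Ω → ℝ} (hm : Measurable Z) (h3 : MemLp Z 3 μ)
    (hc : ∫ ω, Z ω ∂μ = 0) {v : ℝ} (hv : ∫ ω, Z ω ^ 2 ∂μ = v) (t : ℝ) :
    ‖(∫ ω, Complex.exp (Complex.I * t * ((Z ω : ℝ) : ℂ)) ∂μ)
        - ((1 - v * t ^ 2 / 2 : ℝ) : ℂ)‖ ≤ |t| ^ 3 / 6 * ∫ ω, |Z ω| ^ 3 ∂μ := by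
  have h1 : Integrable Z μ :=
    memLp_one_iff_integrable.mp (h3.mono_exponent (by norm_num))
  have h2 : Integrable (fun ω => Z ω ^ 2) μ :=
    (h3.mono_exponent (by norm_num) : MemLp Z 2 μ).integrable_sq
  have h3i : Integrable (fun ω => |Z ω| ^ 3) μ := by
    have := h3.integrable_norm_rpow (by norm_num) (by norm_num)
    simp only [ENNReal.toReal_ofNat, Real.norm_eq_abs] at this
    convert this using 2 with ω
    rw [← Real.rpow_natCast |Z ω| 3]
    norm_num
  have hexp : Integrable (fun ω => Complex.exp (Complex.I * t * ((Z ω : ℝ) : ℂ))) μ := by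
    refine (integrable_const (1:ℝ)).mono'
      ((measurable_expI t).comp hm).aestronglyMeasurable ?_
    filter_upwards with ω
    rw [Complex.norm_exp]
    simp
  have hZc : Integrable (fun ω => Complex.I * ↑t * ((Z ω : ℝ) : ℂ)) μ :=
    h1.ofReal.const_mul _
  have hZ2c : Integrable (fun ω => (t:ℂ) ^ 2 / 2 * ((Z ω ^ 2 : ℝ) : ℂ)) μ :=
    h2.ofReal.const_mul _
  have hE1 : Integrable (fun ω => Complex.exp (Complex.I * t * ((Z ω : ℝ) : ℂ)) - 1) μ :=
    hexp.sub (integrable_const 1)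
  have hE2 : Integrable (fun ω => Complex.exp (Complex.I * t * ((Z ω : ℝ) : ℂ)) - 1
      - Complex.I * ↑t * ((Z ω : ℝ) : ℂ)) μ := hE1.sub hZc
  have hco1 : ∫ ω, ((Z ω : ℝ) : ℂ) ∂μ = ((∫ ω, Z ω ∂μ : ℝ) : ℂ) := by
    have := Complex.ofRealCLM.integral_comp_comm h1
    simpa using this
  have hco2 : ∫ ω, ((Z ω ^ 2 : ℝ) : ℂ) ∂μ = ((∫ ω, Z ω ^ 2 ∂μ : ℝ) : ℂ) := by
    have := Complex.ofRealCLM.integral_comp_comm h2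
    simpa using this
  have heq : (∫ ω, Complex.exp (Complex.I * t * ((Z ω : ℝ) : ℂ)) ∂μ)
      - ((1 - v * t ^ 2 / 2 : ℝ) : ℂ)
      = ∫ ω, (Complex.exp (Complex.I * t * ((Z ω : ℝ) : ℂ)) - 1
          - Complex.I * t * ((Z ω : ℝ) : ℂ) + (t:ℂ) ^ 2 / 2 * ((Z ω ^ 2 : ℝ) : ℂ)) ∂μ := by
    rw [integral_add hE2 hZ2c, integral_sub hE1 hZc,
      integral_sub hexp (integrable_const 1),
      integral_const, integral_const_mul, integral_const_mul,
      hco1, hco2, hc, hv]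
    simp only [probReal_univ, one_smul]
    push_cast
    ring
  rw [heq]
  have hbound : ∀ ω, ‖Complex.exp (Complex.I * t * ((Z ω : ℝ) : ℂ)) - 1
      - Complex.I * t * ((Z ω : ℝ) : ℂ) + (t:ℂ) ^ 2 / 2 * ((Z ω ^ 2 : ℝ) : ℂ)‖
      ≤ |t| ^ 3 / 6 * |Z ω| ^ 3 := by
    intro ω
    have := taylor_expI (t * Z ω)
    have harg : Complex.I * ((t * Z ω : ℝ) : ℂ) = Complex.I * t * ((Z ω : ℝ) : ℂ) := by
      push_cast; ring
    have harg2 : ((t * Z ω : ℝ) : ℂ) ^ 2 / 2 = (t:ℂ) ^ 2 / 2 * ((Z ω ^ 2 : ℝ) : ℂ) := by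
      push_cast; ring
    rw [harg, harg2] at this
    calc _ ≤ |t * Z ω| ^ 3 / 6 := this
      _ = |t| ^ 3 / 6 * |Z ω| ^ 3 := by rw [abs_mul]; ring
  calc ‖∫ ω, (Complex.exp (Complex.I * t * ((Z ω : ℝ) : ℂ)) - 1
          - Complex.I * t * ((Z ω : ℝ) : ℂ) + (t:ℂ) ^ 2 / 2 * ((Z ω ^ 2 : ℝ) : ℂ)) ∂μ‖
      ≤ ∫ ω, |t| ^ 3 / 6 * |Z ω| ^ 3 ∂μ := by
        apply norm_integral_le_of_norm_le (h3i.const_mul _)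
        filter_upwards with ω using hbound ω
    _ = |t| ^ 3 / 6 * ∫ ω, |Z ω| ^ 3 ∂μ := integral_const_mul _ _

end Aux

/-- for independent centered real random variables `Y_1,…,Y_n` with finite
third moments and variances `σ_k²` summing to one, the characteristic function of their sum
satisfies `|E(e^{itΣY_k}) − e^{−t²/2}| ≤ (|t|³/6) Σ E|Y_k|³ + (t⁴/8) Σ σ_k⁴`. -/
theorem statement8
    {Ω : Type*} [MeasurableSpace Ω] (μ : Measure Ω) [IsProbabilityMeasure μ]
    (n : ℕ) (Y : Fin n → Ω → ℝ) (hmeas : ∀ k, Measurable (Y k))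
    (hindep : iIndepFun Y μ)
    (hL3 : ∀ k, MemLp (Y k) 3 μ)
    (hcent : ∀ k, ∫ ω, Y k ω ∂μ = 0)
    (v : Fin n → ℝ) (hv : ∀ k, ∫ ω, (Y k ω) ^ 2 ∂μ = v k)
    (hsum : ∑ k, v k = 1) :
    ∀ t : ℝ,
      ‖(∫ ω, Complex.exp (Complex.I * (t : ℂ) * ((∑ k, Y k ω : ℝ) : ℂ)) ∂μ)
          - ((Real.exp (-t ^ 2 / 2) : ℝ) : ℂ)‖
        ≤ |t| ^ 3 / 6 * ∑ k, ∫ ω, |Y k ω| ^ 3 ∂μ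
          + t ^ 4 / 8 * ∑ k, (v k) ^ 2 := by
  intro t
  have hvnn : ∀ k, 0 ≤ v k := fun k => (hv k) ▸ integral_nonneg (fun ω => sq_nonneg _)
  set φ : Fin n → ℂ := fun k => ∫ ω, Complex.exp (Complex.I * t * ((Y k ω : ℝ) : ℂ)) ∂μ with hφ
  set b : Fin n → ℂ := fun k => ((Real.exp (-(v k * t ^ 2 / 2)) : ℝ) : ℂ) with hb
  have hstep1 : ∫ ω, Complex.exp (Complex.I * (t : ℂ) * ((∑ k, Y k ω : ℝ) : ℂ)) ∂μ
      = ∏ k, φ k := charFun_sum μ hmeas hindep t Finset.univ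
  have hprod : ((Real.exp (-t ^ 2 / 2) : ℝ) : ℂ) = ∏ k, b k := by
    simp only [hb, ← Complex.ofReal_prod]
    congr 1
    rw [← Real.exp_sum]
    congr 1
    rw [Finset.sum_neg_distrib, ← Finset.sum_div, ← Finset.sum_mul, hsum, one_mul]; ring
  have hφle : ∀ k, ‖φ k‖ ≤ 1 := by
    intro k
    have : ‖φ k‖ ≤ ∫ _ω , (1:ℝ) ∂μ := by
      apply norm_integral_le_of_norm_le (integrable_const 1)
      filter_upwards with ω
      rw [Complex.norm_exp]
      simp
    simpa using this
  have hble : ∀ k, ‖b k‖ ≤ 1 := by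
    intro k
    simp only [hb, Complex.norm_real, Real.norm_eq_abs, Real.abs_exp]
    rw [Real.exp_le_one_iff]
    have := hvnn k
    nlinarith [sq_nonneg t]
  have hterm : ∀ k : Fin n, ‖φ k - b k‖
      ≤ |t| ^ 3 / 6 * ∫ ω, |Y k ω| ^ 3 ∂μ + t ^ 4 / 8 * (v k) ^ 2 := by
    intro k
    have hA : ‖φ k - ((1 - v k * t ^ 2 / 2 : ℝ) : ℂ)‖ ≤ |t| ^ 3 / 6 * ∫ ω, |Y k ω| ^ 3 ∂μ :=
      charFun_term_bound μ (hmeas k) (hL3 k) (hcent k) (hv k) t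
    have hB : ‖((1 - v k * t ^ 2 / 2 : ℝ) : ℂ) - b k‖ ≤ t ^ 4 / 8 * (v k) ^ 2 := by
      have hu : 0 ≤ v k * t ^ 2 / 2 := by
        have := hvnn k; positivity
      have := real_exp_taylor hu
      have heq : ‖((1 - v k * t ^ 2 / 2 : ℝ) : ℂ) - b k‖
          = |Real.exp (-(v k * t ^ 2 / 2)) - (1 - v k * t ^ 2 / 2)| := by
        rw [hb, ← Complex.ofReal_sub, Complex.norm_real, Real.norm_eq_abs, abs_sub_comm]
      rw [heq]
      calc |Real.exp (-(v k * t ^ 2 / 2)) - (1 - v k * t ^ 2 / 2)|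
          ≤ (v k * t ^ 2 / 2) ^ 2 / 2 := this
        _ = t ^ 4 / 8 * (v k) ^ 2 := by ring
    calc ‖φ k - b k‖ ≤ ‖φ k - ((1 - v k * t ^ 2 / 2 : ℝ) : ℂ)‖
          + ‖((1 - v k * t ^ 2 / 2 : ℝ) : ℂ) - b k‖ := norm_sub_le_norm_sub_add_norm_sub _ _ _
      _ ≤ _ := add_le_add hA hB
  rw [hstep1, hprod]
  calc ‖∏ k, φ k - ∏ k, b k‖ ≤ ∑ k, ‖φ k - b k‖ :=
        prod_sub_prod_le Finset.univ φ b hφle hble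
    _ ≤ ∑ k, (|t| ^ 3 / 6 * ∫ ω, |Y k ω| ^ 3 ∂μ + t ^ 4 / 8 * (v k) ^ 2) :=
        Finset.sum_le_sum fun k _ => hterm k
    _ = |t| ^ 3 / 6 * ∑ k, ∫ ω, |Y k ω| ^ 3 ∂μ + t ^ 4 / 8 * ∑ k, (v k) ^ 2 := by
        rw [Finset.sum_add_distrib, ← Finset.mul_sum, ← Finset.mul_sum]
end

section
/- Let θ̂ = (θ̂_1,…,θ̂_{n-1}) be uniformly distributed on the unit sphere S^{n-2} of ℝ^{n-1}. For every m ≥ 1 there exists a constant c_m such that for all n ≥ 2 and all 1 ≤ k ≤ n−1, E| Σ_{ℓ=k}^{n-1} θ̂_ℓ/√(ℓ(ℓ+1)) |^m ≤ c_m n^{-m/2} k^{-m/2}. -/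
open MeasureTheory ProbabilityTheory

open Real

noncomputable section

lemma gauss_lin_integrable {b : ℝ} (hb : 0 < b) (c : ℝ) :
    Integrable fun x : ℝ => rexp (-b * x ^ 2 + c * x) := by
  have h : ∀ x : ℝ, -b * x ^ 2 + c * x = -b * (x - c / (2 * b)) ^ 2 + c ^ 2 / (4 * b) := by
    intro x; field_simp; ring
  simp_rw [h, exp_add]
  exact (((integrable_exp_neg_mul_sq hb).comp_sub_right (c / (2 * b)))).mul_const _

lemma gauss_lin_integral {b : ℝ} (hb : 0 < b) (c : ℝ) :
    ∫ x : ℝ, rexp (-b * x ^ 2 + c * x) = √(π / b) * rexp (c ^ 2 / (4 * b)) := by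
  have h : ∀ x : ℝ, -b * x ^ 2 + c * x = -b * (x - c / (2 * b)) ^ 2 + c ^ 2 / (4 * b) := by
    intro x; field_simp; ring
  simp_rw [h, exp_add]
  rw [MeasureTheory.integral_mul_const,
    integral_sub_right_eq_self (fun x => rexp (-b * x ^ 2)) (c / (2 * b)), integral_gaussian]

lemma gaussianPDFReal_zero_one :
    gaussianPDFReal 0 1 = fun x => (√(2 * π))⁻¹ * rexp (-(1/2 : ℝ) * x ^ 2) := by
  rw [gaussianPDFReal_def]
  ext x
  simp only [NNReal.coe_one, mul_one, sub_zero]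
  congr 1
  ring

lemma gaussianReal_eq_withDensity :
    gaussianReal 0 1 = volume.withDensity fun x => ((gaussianPDFReal 0 1 x).toNNReal : ENNReal) := by
  rw [gaussianReal_of_var_ne_zero _ one_ne_zero]
  rfl

lemma integral_gaussianReal_eq (g : ℝ → ℝ) :
    ∫ x, g x ∂(gaussianReal 0 1) = ∫ x, gaussianPDFReal 0 1 x * g x := by
  rw [gaussianReal_eq_withDensity,
    integral_withDensity_eq_integral_smul ((measurable_gaussianPDFReal 0 1).real_toNNReal) g]
  congr 1 with x
  simp [NNReal.smul_def, Real.coe_toNNReal _ (gaussianPDFReal_nonneg 0 1 x)]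

lemma integrable_gaussianReal_iff {g : ℝ → ℝ} :
    Integrable g (gaussianReal 0 1) ↔ Integrable (fun x => gaussianPDFReal 0 1 x * g x) := by
  rw [gaussianReal_eq_withDensity,
    integrable_withDensity_iff_integrable_smul ((measurable_gaussianPDFReal 0 1).real_toNNReal)]
  constructor <;> intro h <;> refine h.congr (Filter.Eventually.of_forall fun x => ?_) <;>
    simp [NNReal.smul_def, Real.coe_toNNReal _ (gaussianPDFReal_nonneg 0 1 x)]

lemma integral_exp_mul_gaussianReal (c : ℝ) :
    ∫ x, rexp (c * x) ∂(gaussianReal 0 1) = rexp (c ^ 2 / 2) := by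
  rw [integral_gaussianReal_eq, gaussianPDFReal_zero_one]
  simp_rw [mul_assoc, ← exp_add]
  rw [MeasureTheory.integral_const_mul, gauss_lin_integral (by norm_num : (0:ℝ) < 1/2)]
  have h1 : π / (1/2 : ℝ) = 2 * π := by ring
  have h2 : c ^ 2 / (4 * (1/2 : ℝ)) = c ^ 2 / 2 := by ring
  rw [h1, h2, ← mul_assoc, inv_mul_cancel₀ (by positivity : √(2*π) ≠ 0), one_mul]

lemma integrable_exp_mul_gaussianReal (c : ℝ) :
    Integrable (fun x => rexp (c * x)) (gaussianReal 0 1) := by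
  rw [integrable_gaussianReal_iff, gaussianPDFReal_zero_one]
  simp_rw [mul_assoc, ← exp_add]
  exact (gauss_lin_integrable (by norm_num) c).const_mul _

lemma integral_exp_neg_sq_gaussianReal :
    ∫ x, rexp (-(x ^ 2)) ∂(gaussianReal 0 1) = (√3)⁻¹ := by
  rw [integral_gaussianReal_eq, gaussianPDFReal_zero_one]
  simp_rw [mul_assoc, ← exp_add]
  have h : ∀ x : ℝ, -(1/2 : ℝ) * x ^ 2 + -(x ^ 2) = -(3/2 : ℝ) * x ^ 2 + 0 * x := by
    intro x; ring
  simp_rw [h]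
  rw [MeasureTheory.integral_const_mul, gauss_lin_integral (by norm_num : (0:ℝ) < 3/2)]
  have h2 : (0:ℝ) ^ 2 / (4 * (3/2 : ℝ)) = 0 := by norm_num
  rw [h2, exp_zero, mul_one]
  rw [show π / (3/2:ℝ) = (2*π) * 3⁻¹ by ring, Real.sqrt_mul (by positivity : (0:ℝ) ≤ 2*π) 3⁻¹, Real.sqrt_inv,
    ← mul_assoc, inv_mul_cancel₀ (by positivity : √(2*π) ≠ 0), one_mul]

lemma integrable_exp_neg_sq_gaussianReal :
    Integrable (fun x => rexp (-(x ^ 2))) (gaussianReal 0 1) := by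
  rw [integrable_gaussianReal_iff, gaussianPDFReal_zero_one]
  simp_rw [mul_assoc, ← exp_add]
  have h : ∀ x : ℝ, -(1/2 : ℝ) * x ^ 2 + -(x ^ 2) = -(3/2 : ℝ) * x ^ 2 + 0 * x := by
    intro x; ring
  simp_rw [h]
  exact (gauss_lin_integrable (by norm_num) 0).const_mul _

lemma lintegral_pi_ofReal_prod {d : ℕ} (g : Fin d → ℝ → ℝ) (h0 : ∀ i x, 0 ≤ g i x)
    (hint : ∀ i, Integrable (g i) (gaussianReal 0 1)) :
    ∫⁻ y, ENNReal.ofReal (∏ i, g i (y i)) ∂(Measure.pi fun _ : Fin d => gaussianReal 0 1)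
      = ENNReal.ofReal (∏ i, ∫ x, g i x ∂(gaussianReal 0 1)) := by
  letI : MeasureSpace ℝ := ⟨gaussianReal 0 1⟩
  haveI : SigmaFinite (volume : Measure ℝ) := inferInstanceAs (SigmaFinite (gaussianReal 0 1))
  have hμ : (Measure.pi fun _ : Fin d => gaussianReal 0 1) = (volume : Measure (Fin d → ℝ)) :=
    volume_pi.symm
  rw [← ofReal_integral_eq_lintegral_ofReal
      (MeasureTheory.Integrable.fintype_prod (𝕜 := ℝ) hint)
      (Filter.Eventually.of_forall fun y => Finset.prod_nonneg fun i _ => h0 i (y i)),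
    MeasureTheory.integral_fintype_prod_eq_prod (f := g)]

/-- The uniform distribution on the unit sphere `S^{m-1}` of `ℝ^m`, realized as the law of
`ξ / ‖ξ‖` where `ξ` is a standard Gaussian vector of `ℝ^m`. -/
def uniformSphere (m : ℕ) : Measure (EuclideanSpace ℝ (Fin m)) :=
  ((Measure.pi fun _ : Fin m => gaussianReal 0 1).map
      (MeasurableEquiv.toLp 2 (Fin m → ℝ))).map fun x => ‖x‖⁻¹ • x

set_option maxHeartbeats 1000000 in
/-- bound (3.27): for `θ̂` uniform on the sphere `S^{n-2}` of `ℝ^{n-1}`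
(coordinates `θ̂_1,…,θ̂_{n-1}`), for every `m ≥ 1` there is `c_m` such that for all `n ≥ 2`
and all `1 ≤ k ≤ n−1`, `E|Σ_{ℓ=k}^{n-1} θ̂_ℓ/√(ℓ(ℓ+1))|^m ≤ c_m n^{-m/2} k^{-m/2}`. -/
theorem statement14 :
    ∀ m : ℕ, 1 ≤ m → ∃ c : ℝ, 0 < c ∧ ∀ n : ℕ, 2 ≤ n → ∀ k : ℕ, 1 ≤ k → k ≤ n - 1 →
      ∫⁻ x, ENNReal.ofReal
          (|∑ i : Fin (n - 1), if k ≤ (i : ℕ) + 1 then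
              x i / Real.sqrt ((((i : ℕ) : ℝ) + 1) * (((i : ℕ) : ℝ) + 2)) else 0| ^ m)
          ∂(uniformSphere (n - 1))
        ≤ ENNReal.ofReal (c / ((n : ℝ) ^ ((m : ℝ) / 2) * (k : ℝ) ^ ((m : ℝ) / 2))) := by
  intro m hm
  -- the geometric ratio
  set ρ : ℝ := rexp (1/4) * (√3)⁻¹ with hρdef
  have hρpos : 0 < ρ := by positivity
  have hρlt : ρ < 1 := by
    have hsq : rexp (1/4) ^ 2 = rexp (1/2) := by rw [sq, ← Real.exp_add]; norm_num
    have h2 : rexp (1/2 : ℝ) < 3 :=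
      lt_trans (Real.exp_lt_exp.2 (by norm_num)) (lt_trans Real.exp_one_lt_d9 (by norm_num))
    have h1 : rexp (1/4) < √3 := (Real.lt_sqrt (Real.exp_nonneg _)).2 (by rw [hsq]; exact h2)
    rw [hρdef, ← div_eq_mul_inv, div_lt_one (by positivity : (0:ℝ) < √3)]
    exact h1
  have hexp2 : rexp (1/2 : ℝ) ≤ 2 := by
    have hsq : rexp (1/2) * rexp (1/2) = rexp 1 := by rw [← Real.exp_add]; norm_num
    nlinarith [Real.exp_pos (1/2 : ℝ), Real.exp_one_lt_d9]
  -- bounded polynomial-geometric sequence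
  obtain ⟨B, hB⟩ : ∃ B : ℝ, ∀ j : ℕ, (j : ℝ) ^ m * ρ ^ j ≤ B := by
    obtain ⟨B, hB⟩ := (tendsto_pow_const_mul_const_pow_of_lt_one m hρpos.le hρlt).bddAbove_range
    exact ⟨B, fun j => hB (Set.mem_range_self j)⟩
  have hB0 : 0 ≤ B := by
    have := hB 0
    simpa [zero_pow (by omega : m ≠ 0)] using this
  refine ⟨(3:ℝ) ^ m * (4 * (m.factorial : ℝ)) + B / ρ + 1, by positivity, ?_⟩
  intro n hn k hk1 hk2
  set d : ℕ := n - 1 with hd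
  have hd1 : 1 ≤ d := le_trans hk1 hk2
  have hdn : d + 1 = n := by omega
  have hkd : k ≤ d := hk2
  -- the coefficient vector
  set a : Fin d → ℝ := fun i =>
    if k ≤ (i : ℕ) + 1 then (Real.sqrt ((((i : ℕ) : ℝ) + 1) * (((i : ℕ) : ℝ) + 2)))⁻¹ else 0
    with ha
  have ha_nonneg : ∀ i, 0 ≤ a i := by
    intro i; rw [ha]; dsimp only; split
    · positivity
    · exact le_rfl
  -- telescoping bound on ∑ a i ^ 2
  have hsum_le : ∑ i, a i ^ 2 ≤ (k : ℝ)⁻¹ := by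
    have hcast : ∀ i : Fin d, a i ^ 2 =
        if k ≤ (i : ℕ) + 1 then ((((i:ℕ):ℝ) + 1)⁻¹ - (((i:ℕ):ℝ) + 2)⁻¹) else 0 := by
      intro i
      rw [ha]; dsimp only; split
      · rw [inv_pow, Real.sq_sqrt (by positivity)]
        rw [eq_sub_iff_add_eq]
        field_simp
        ring
      · simp
    rw [Finset.sum_congr rfl (fun i _ => hcast i), Fin.sum_univ_eq_sum_range
      (fun j => if k ≤ j + 1 then (((j:ℕ):ℝ) + 1)⁻¹ - (((j:ℕ):ℝ) + 2)⁻¹ else 0) d]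
    rw [← Finset.sum_filter]
    have hfe : (Finset.range d).filter (fun j => k ≤ j + 1) = Finset.Ico (k-1) d := by
      ext j
      simp only [Finset.mem_filter, Finset.mem_range, Finset.mem_Ico]
      omega
    rw [hfe]
    have hsummand : ∀ j ∈ Finset.Ico (k-1) d, (((j:ℕ):ℝ) + 1)⁻¹ - (((j:ℕ):ℝ) + 2)⁻¹
        = (fun j : ℕ => ((j:ℝ) + 1)⁻¹) j - (fun j : ℕ => ((j:ℝ) + 1)⁻¹) (j+1) := by
      intro j _
      push_cast
      ring_nf
    rw [Finset.sum_congr rfl hsummand, Finset.sum_Ico_eq_sub _ (by omega : k - 1 ≤ d),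
      Finset.sum_range_sub' (fun j : ℕ => ((j:ℝ) + 1)⁻¹) d,
      Finset.sum_range_sub' (fun j : ℕ => ((j:ℝ) + 1)⁻¹) (k-1)]
    have hgk : (((k-1:ℕ)):ℝ) + 1 = (k:ℝ) := by
      have h1 : ((k-1:ℕ):ℝ) = (k:ℝ) - 1 := by
        rw [Nat.cast_sub hk1]; norm_num
      rw [h1]; ring
    rw [hgk]
    have hd0 : (0:ℝ) ≤ ((d:ℝ) + 1)⁻¹ := by positivity
    have hk0 : (0:ℝ) < (k:ℝ)⁻¹ := by
      have : (0:ℝ) < (k:ℝ) := by exact_mod_cast hk1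
      positivity
    norm_num
    linarith
  -- sigma
  set σ : ℝ := Real.sqrt (∑ i, a i ^ 2) with hσ
  have hsum_pos : 0 < ∑ i, a i ^ 2 := by
    have hkd' : k - 1 < d := by omega
    refine Finset.sum_pos' (fun i _ => sq_nonneg _) ⟨⟨k-1, hkd'⟩, Finset.mem_univ _, ?_⟩
    have hcond : k ≤ ((⟨k-1, hkd'⟩ : Fin d) : ℕ) + 1 := by simp; omega
    rw [ha]; dsimp only
    rw [if_pos hcond]
    positivity
  have hσpos : 0 < σ := Real.sqrt_pos.2 hsum_pos
  have hσsq : σ ^ 2 = ∑ i, a i ^ 2 := Real.sq_sqrt hsum_pos.le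
  have hσk : σ ^ 2 ≤ (k:ℝ)⁻¹ := hσsq ▸ hsum_le
  -- T and R
  set T : (Fin d → ℝ) → ℝ := fun y => ∑ i, a i * y i with hT
  set R : (Fin d → ℝ) → ℝ := fun y => Real.sqrt (∑ i, y i ^ 2) with hR
  have hRnonneg : ∀ y, 0 ≤ R y := fun y => Real.sqrt_nonneg _
  have hTb : ∀ y, |T y| ≤ σ * R y := by
    intro y
    have h2 : (T y)^2 ≤ (∑ i, a i ^2) * (∑ i, y i ^2) := Finset.sum_mul_sq_le_sq_mul_sq _ _ _
    rw [← Real.sqrt_sq_eq_abs]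
    calc √((T y)^2) ≤ √((∑ i, a i ^2) * (∑ i, y i ^2)) := Real.sqrt_le_sqrt h2
    _ = σ * R y := by rw [Real.sqrt_mul (Finset.sum_nonneg fun i _ => sq_nonneg _)]
  have hCS : ∀ y, (R y)⁻¹ * |T y| ≤ σ := by
    intro y
    rcases eq_or_lt_of_le (hRnonneg y) with h0 | hpos
    · have h1 : |T y| = 0 := le_antisymm (by simpa [← h0] using hTb y) (abs_nonneg _)
      rw [h1, mul_zero]
      exact hσpos.le
    · rw [inv_mul_le_iff₀ hpos, mul_comm]
      exact hTb y
  -- measure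
  set μ : Measure (Fin d → ℝ) := Measure.pi fun _ : Fin d => gaussianReal 0 1 with hμ
  have hsmul : Measurable fun x : EuclideanSpace ℝ (Fin d) => ‖x‖⁻¹ • x :=
    measurable_norm.inv.smul measurable_id
  have hF : Measurable fun x : EuclideanSpace ℝ (Fin d) => ENNReal.ofReal
      (|∑ i : Fin d, if k ≤ (i : ℕ) + 1 then
          x i / Real.sqrt ((((i : ℕ) : ℝ) + 1) * (((i : ℕ) : ℝ) + 2)) else 0| ^ m) := by
    apply Measurable.ennreal_ofReal
    apply Measurable.pow_const
    apply Measurable.abs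
    apply Finset.measurable_sum
    intro i _
    by_cases h : k ≤ (i : ℕ) + 1
    · simp only [if_pos h]; exact ((measurable_pi_apply i).comp (WithLp.measurable_ofLp 2 _)).div_const _
    · simp only [if_neg h]; exact measurable_const
  rw [show uniformSphere d = ((Measure.pi fun _ : Fin d => gaussianReal 0 1).map
      (MeasurableEquiv.toLp 2 (Fin d → ℝ))).map (fun x => ‖x‖⁻¹ • x) from rfl,
    lintegral_map hF hsmul]
  rw [lintegral_map (f := fun x : EuclideanSpace ℝ (Fin d) => ENNReal.ofReal
      (|∑ i : Fin d, if k ≤ (i : ℕ) + 1 then (‖x‖⁻¹ • x) i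
        / Real.sqrt ((((i : ℕ) : ℝ) + 1) * (((i : ℕ) : ℝ) + 2)) else 0| ^ m))
    (hF.comp hsmul) (MeasurableEquiv.measurable _)]
  have hpt : ∀ y : Fin d → ℝ,
      (∑ i : Fin d, if k ≤ (i : ℕ) + 1 then
        (‖(MeasurableEquiv.toLp 2 (Fin d → ℝ)) y‖⁻¹
            • (MeasurableEquiv.toLp 2 (Fin d → ℝ)) y) i
          / Real.sqrt ((((i : ℕ) : ℝ) + 1) * (((i : ℕ) : ℝ) + 2)) else 0)
      = (R y)⁻¹ * T y := by
    intro y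
    have hnorm : ‖(MeasurableEquiv.toLp 2 (Fin d → ℝ)) y‖ = R y := by
      rw [EuclideanSpace.norm_eq, hR]
      congr 1
      exact Finset.sum_congr rfl fun i _ => by rw [Real.norm_eq_abs, sq_abs]; rfl
    have hco : ∀ i, ((‖(MeasurableEquiv.toLp 2 (Fin d → ℝ)) y‖⁻¹
        • (MeasurableEquiv.toLp 2 (Fin d → ℝ)) y) i) = (R y)⁻¹ * y i := by
      intro i; rw [PiLp.smul_apply, hnorm]; rfl
    simp only [hT, Finset.mul_sum]
    refine Finset.sum_congr rfl fun i _ => ?_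
    rw [hco i, ha]
    dsimp only
    by_cases h : k ≤ (i : ℕ) + 1
    · rw [if_pos h, if_pos h, div_eq_mul_inv]; ring
    · rw [if_neg h, if_neg h, zero_mul, mul_zero]
  simp_rw [hpt]
  -- normalized coefficients
  set c' : Fin d → ℝ := fun i => a i / σ with hc'
  have hc2 : ∑ i, c' i ^ 2 = 1 := by
    simp only [hc', div_pow]
    rw [← Finset.sum_div, ← hσsq, div_self (pow_ne_zero _ hσpos.ne')]
  have hmeasT : Measurable T := by
    rw [hT]; exact Finset.measurable_sum _ fun i _ => (measurable_pi_apply i).const_mul _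
  have hmeasE1 : Measurable fun y : Fin d → ℝ => ENNReal.ofReal (∏ i, rexp (c' i * y i)) :=
    (Finset.measurable_prod _ fun i _ =>
      Real.measurable_exp.comp ((measurable_pi_apply i).const_mul _)).ennreal_ofReal
  -- moment bound
  have hmom : ∫⁻ y, ENNReal.ofReal (|T y| ^ m) ∂μ
      ≤ ENNReal.ofReal ((m.factorial : ℝ) * σ ^ m * (2 * rexp (1/2))) := by
    have hpt2 : ∀ y, |T y| ^ m ≤ (m.factorial : ℝ) * σ ^ m
        * ((∏ i, rexp (c' i * y i)) + ∏ i, rexp (-c' i * y i)) := by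
      intro y
      have hE1 : rexp (T y / σ) = ∏ i, rexp (c' i * y i) := by
        rw [← Real.exp_sum]
        congr 1
        simp only [hT, hc']
        rw [Finset.sum_div]
        exact Finset.sum_congr rfl fun i _ => by ring
      have hE2 : rexp (-(T y) / σ) = ∏ i, rexp (-c' i * y i) := by
        rw [← Real.exp_sum]
        congr 1
        simp only [hT, hc']
        rw [neg_div, Finset.sum_div, ← Finset.sum_neg_distrib]
        exact Finset.sum_congr rfl fun i _ => by ring
      have hx : 0 ≤ |T y| / σ := by positivity
      have hfac : (|T y| / σ) ^ m ≤ (m.factorial : ℝ) * rexp (|T y| / σ) := by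
        have hs := Real.sum_le_exp_of_nonneg hx (m+1)
        have hsingle : (|T y|/σ)^m / (m.factorial : ℝ)
            ≤ ∑ i ∈ Finset.range (m+1), (|T y|/σ)^i / (i.factorial : ℝ) :=
          Finset.single_le_sum (f := fun i => (|T y|/σ)^i / (i.factorial : ℝ))
            (fun i _ => by positivity) (Finset.self_mem_range_succ m)
        have h3 := le_trans hsingle hs
        rw [div_le_iff₀ (by positivity : (0:ℝ) < (m.factorial : ℝ))] at h3
        linarith [h3]
      have habs : rexp (|T y|/σ) ≤ rexp (T y/σ) + rexp (-(T y)/σ) := by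
        rcases abs_cases (T y) with ⟨h1, _⟩ | ⟨h1, _⟩
        · rw [h1]; linarith [Real.exp_pos (-(T y)/σ)]
        · rw [h1]; linarith [Real.exp_pos ((T y)/σ)]
      have h1 : |T y|^m = σ^m * (|T y|/σ)^m := by
        rw [div_pow, mul_comm, div_mul_cancel₀ _ (pow_ne_zero m hσpos.ne')]
      calc |T y|^m = σ^m * (|T y|/σ)^m := h1
      _ ≤ σ^m * ((m.factorial:ℝ) * rexp (|T y|/σ)) :=
          mul_le_mul_of_nonneg_left hfac (by positivity)
      _ ≤ σ^m * ((m.factorial:ℝ) * (rexp (T y/σ) + rexp (-(T y)/σ))) := by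
          have := mul_le_mul_of_nonneg_left habs (by positivity : (0:ℝ) ≤ (m.factorial:ℝ))
          exact mul_le_mul_of_nonneg_left this (by positivity)
      _ = (m.factorial:ℝ) * σ^m * (rexp (T y/σ) + rexp (-(T y)/σ)) := by ring
      _ = (m.factorial:ℝ) * σ^m * ((∏ i, rexp (c' i * y i)) + ∏ i, rexp (-c' i * y i)) := by
          rw [hE1, hE2]
    calc ∫⁻ y, ENNReal.ofReal (|T y| ^ m) ∂μ
        ≤ ∫⁻ y, ENNReal.ofReal ((m.factorial:ℝ) * σ^m)
            * (ENNReal.ofReal (∏ i, rexp (c' i * y i))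
              + ENNReal.ofReal (∏ i, rexp (-c' i * y i))) ∂μ := by
          apply lintegral_mono
          intro y
          calc ENNReal.ofReal (|T y| ^ m)
              ≤ ENNReal.ofReal ((m.factorial:ℝ) * σ^m
                  * ((∏ i, rexp (c' i * y i)) + ∏ i, rexp (-c' i * y i))) :=
                ENNReal.ofReal_le_ofReal (hpt2 y)
            _ = _ := by
                rw [ENNReal.ofReal_mul (by positivity),
                  ENNReal.ofReal_add (by positivity) (by positivity)]
      _ = ENNReal.ofReal ((m.factorial:ℝ) * σ^m)
            * ((∫⁻ y, ENNReal.ofReal (∏ i, rexp (c' i * y i)) ∂μ)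
              + ∫⁻ y, ENNReal.ofReal (∏ i, rexp (-c' i * y i)) ∂μ) := by
          rw [lintegral_const_mul' _ _ ENNReal.ofReal_ne_top, lintegral_add_left hmeasE1]
      _ = ENNReal.ofReal ((m.factorial:ℝ) * σ^m)
            * (ENNReal.ofReal (rexp (1/2)) + ENNReal.ofReal (rexp (1/2))) := by
          have hprod1 : ∏ i : Fin d, ∫ x, rexp (c' i * x) ∂(gaussianReal 0 1) = rexp (1/2) := by
            have : ∀ i : Fin d, ∫ x, rexp (c' i * x) ∂(gaussianReal 0 1) = rexp (c' i ^2/2) :=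
              fun i => integral_exp_mul_gaussianReal (c' i)
            rw [Finset.prod_congr rfl fun i _ => this i, ← Real.exp_sum, ← Finset.sum_div, hc2]
          have hprod2 : ∏ i : Fin d, ∫ x, rexp (-c' i * x) ∂(gaussianReal 0 1) = rexp (1/2) := by
            have : ∀ i : Fin d, ∫ x, rexp (-c' i * x) ∂(gaussianReal 0 1) = rexp (c' i ^2/2) :=
              fun i => by rw [integral_exp_mul_gaussianReal (-c' i), neg_pow]; norm_num
            rw [Finset.prod_congr rfl fun i _ => this i, ← Real.exp_sum, ← Finset.sum_div, hc2]
          rw [hμ, lintegral_pi_ofReal_prod _ (fun i x => (Real.exp_pos _).le)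
              (fun i => _root_.integrable_exp_mul_gaussianReal (c' i)),
            lintegral_pi_ofReal_prod _ (fun i x => (Real.exp_pos _).le)
              (fun i => _root_.integrable_exp_mul_gaussianReal (-c' i)), hprod1, hprod2]
      _ = ENNReal.ofReal ((m.factorial : ℝ) * σ ^ m * (2 * rexp (1/2))) := by
          rw [← ENNReal.ofReal_add (by positivity) (by positivity),
            ← ENNReal.ofReal_mul (by positivity)]
          congr 1
          ring
  -- split the integral
  set A : Set (Fin d → ℝ) := {y | (d:ℝ)/4 ≤ ∑ i, y i ^ 2} with hAdef
  have hAm : MeasurableSet A := measurableSet_le measurable_const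
    (Finset.measurable_sum _ fun i _ => (measurable_pi_apply i).pow_const 2)
  rw [← lintegral_add_compl (fun y => ENNReal.ofReal (|(R y)⁻¹ * T y| ^ m)) hAm]
  -- tail probability
  have htail : μ Aᶜ ≤ ENNReal.ofReal (ρ ^ d) := by
    have hint3 : ∀ _ : Fin d, Integrable (fun x => rexp (1/4) * rexp (-(x^2)))
        (gaussianReal 0 1) := fun _ => integrable_exp_neg_sq_gaussianReal.const_mul _
    calc μ Aᶜ = ∫⁻ _ in Aᶜ, 1 ∂μ := (setLIntegral_one _).symm
    _ ≤ ∫⁻ y in Aᶜ, ENNReal.ofReal (∏ i, rexp (1/4) * rexp (-(y i^2))) ∂μ := by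
        apply setLIntegral_mono
        · exact (Finset.measurable_prod _ fun i _ => ((Real.measurable_exp.comp
            (((measurable_pi_apply i).pow_const 2).neg)).const_mul _)).ennreal_ofReal
        · intro y hy
          have hylt : ∑ i, y i ^ 2 < (d:ℝ)/4 := by
            have : y ∉ A := hy
            rw [hAdef] at this
            simpa using this
          have hprod : ∏ i, rexp (1/4) * rexp (-(y i^2)) = rexp ((d:ℝ)/4 - ∑ i, y i^2) := by
            simp_rw [← Real.exp_add]
            rw [← Real.exp_sum]
            congr 1
            rw [Finset.sum_add_distrib, Finset.sum_const, Finset.card_univ, Fintype.card_fin,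
              Finset.sum_neg_distrib]
            push_cast
            ring
          rw [hprod]
          exact ENNReal.one_le_ofReal.2 (Real.one_le_exp (by linarith))
    _ ≤ ∫⁻ y, ENNReal.ofReal (∏ i, rexp (1/4) * rexp (-(y i^2))) ∂μ :=
        setLIntegral_le_lintegral _ _
    _ = ENNReal.ofReal (ρ ^ d) := by
        rw [hμ, lintegral_pi_ofReal_prod _ (fun i x => by positivity) hint3]
        congr 1
        rw [Finset.prod_congr rfl fun (i : Fin d) _ => by
          rw [MeasureTheory.integral_const_mul, integral_exp_neg_sq_gaussianReal]]
        rw [Finset.prod_const, Finset.card_univ, Fintype.card_fin, hρdef]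
  -- bound on the complement part
  have hIc : ∫⁻ y in Aᶜ, ENNReal.ofReal (|(R y)⁻¹ * T y| ^ m) ∂μ
      ≤ ENNReal.ofReal (σ^m * ρ^d) := by
    have habs1 : ∀ y, |(R y)⁻¹ * T y| = (R y)⁻¹ * |T y| := by
      intro y; rw [abs_mul, abs_inv, abs_of_nonneg (hRnonneg y)]
    calc ∫⁻ y in Aᶜ, ENNReal.ofReal (|(R y)⁻¹ * T y| ^ m) ∂μ
        ≤ ∫⁻ _ in Aᶜ, ENNReal.ofReal (σ^m) ∂μ := by
          apply setLIntegral_mono measurable_const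
          intro y _
          apply ENNReal.ofReal_le_ofReal
          rw [habs1 y]
          exact pow_le_pow_left₀ (by positivity) (hCS y) m
      _ = ENNReal.ofReal (σ^m) * μ Aᶜ := setLIntegral_const _ _
      _ ≤ ENNReal.ofReal (σ^m) * ENNReal.ofReal (ρ^d) := mul_le_mul_right htail _
      _ = ENNReal.ofReal (σ^m * ρ^d) := (ENNReal.ofReal_mul (by positivity)).symm
  -- bound on the main part
  set r0 : ℝ := Real.sqrt ((d:ℝ)/4) with hr0
  have hdposR : (0:ℝ) < (d:ℝ) := by exact_mod_cast hd1
  have hr0pos : 0 < r0 := Real.sqrt_pos.2 (by positivity)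
  have hIA : ∫⁻ y in A, ENNReal.ofReal (|(R y)⁻¹ * T y| ^ m) ∂μ
      ≤ ENNReal.ofReal (r0⁻¹^m) * ENNReal.ofReal ((m.factorial:ℝ) * σ^m * (2*rexp (1/2))) := by
    have habs1 : ∀ y, |(R y)⁻¹ * T y| = (R y)⁻¹ * |T y| := by
      intro y; rw [abs_mul, abs_inv, abs_of_nonneg (hRnonneg y)]
    calc ∫⁻ y in A, ENNReal.ofReal (|(R y)⁻¹ * T y| ^ m) ∂μ
        ≤ ∫⁻ y in A, ENNReal.ofReal (r0⁻¹^m * |T y|^m) ∂μ := by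
          apply setLIntegral_mono
          · exact ((hmeasT.abs.pow_const m).const_mul _).ennreal_ofReal
          · intro y hy
            apply ENNReal.ofReal_le_ofReal
            have hyA : (d:ℝ)/4 ≤ ∑ i, y i^2 := hy
            have hRy : r0 ≤ R y := by rw [hr0, hR]; exact Real.sqrt_le_sqrt hyA
            rw [habs1 y, mul_pow]
            apply mul_le_mul_of_nonneg_right _ (pow_nonneg (abs_nonneg _) m)
            exact pow_le_pow_left₀ (by positivity) (inv_anti₀ hr0pos hRy) m
      _ ≤ ∫⁻ y, ENNReal.ofReal (r0⁻¹^m * |T y|^m) ∂μ := setLIntegral_le_lintegral _ _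
      _ = ENNReal.ofReal (r0⁻¹^m) * ∫⁻ y, ENNReal.ofReal (|T y|^m) ∂μ := by
          simp_rw [ENNReal.ofReal_mul (by positivity : (0:ℝ) ≤ r0⁻¹^m)]
          rw [lintegral_const_mul' _ _ ENNReal.ofReal_ne_top]
      _ ≤ _ := mul_le_mul_right hmom _
  -- combine and conclude
  calc (∫⁻ y in A, ENNReal.ofReal (|(R y)⁻¹ * T y| ^ m) ∂μ)
        + ∫⁻ y in Aᶜ, ENNReal.ofReal (|(R y)⁻¹ * T y| ^ m) ∂μ
      ≤ ENNReal.ofReal (r0⁻¹^m) * ENNReal.ofReal ((m.factorial:ℝ) * σ^m * (2*rexp (1/2)))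
          + ENNReal.ofReal (σ^m * ρ^d) := add_le_add hIA hIc
    _ = ENNReal.ofReal (r0⁻¹^m * ((m.factorial:ℝ) * σ^m * (2*rexp (1/2))) + σ^m * ρ^d) := by
        rw [← ENNReal.ofReal_mul (by positivity), ← ENNReal.ofReal_add (by positivity) (by positivity)]
    _ ≤ ENNReal.ofReal (((3:ℝ) ^ m * (4 * (m.factorial : ℝ)) + B / ρ + 1)
          / ((n : ℝ) ^ ((m : ℝ) / 2) * (k : ℝ) ^ ((m : ℝ) / 2))) := by
        apply ENNReal.ofReal_le_ofReal
        have hNn : (n:ℝ) ^ ((m:ℝ)/2) = (√(n:ℝ))^m := by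
          rw [show (m:ℝ)/2 = (1/2:ℝ)*(m:ℕ) by push_cast; ring,
            Real.rpow_mul (by positivity), ← Real.sqrt_eq_rpow, Real.rpow_natCast]
        have hKk : (k:ℝ) ^ ((m:ℝ)/2) = (√(k:ℝ))^m := by
          rw [show (m:ℝ)/2 = (1/2:ℝ)*(m:ℕ) by push_cast; ring,
            Real.rpow_mul (by positivity), ← Real.sqrt_eq_rpow, Real.rpow_natCast]
        have hnposR : (0:ℝ) < (n:ℝ) := by exact_mod_cast (by omega : 0 < n)
        have hkposR : (0:ℝ) < (k:ℝ) := by exact_mod_cast hk1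
        rw [hNn, hKk, le_div_iff₀ (by positivity)]
        have hb1 : r0⁻¹^m * (√(n:ℝ))^m ≤ 3^m := by
          have hn2d : (n:ℝ) ≤ 2*(d:ℝ) := by exact_mod_cast (by omega : n ≤ 2*d)
          have h9 : ((d:ℝ)/4)⁻¹ * (n:ℝ) ≤ 9 := by
            rw [inv_mul_le_iff₀ (by positivity)]
            linarith
          have hstep : r0⁻¹ * √(n:ℝ) ≤ 3 := by
            rw [hr0, ← Real.sqrt_inv, ← Real.sqrt_mul (by positivity)]
            calc √(((d:ℝ)/4)⁻¹ * (n:ℝ)) ≤ √9 := Real.sqrt_le_sqrt h9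
            _ = 3 := by rw [show (9:ℝ) = 3^2 by norm_num, Real.sqrt_sq (by norm_num)]
          calc r0⁻¹^m * (√(n:ℝ))^m = (r0⁻¹ * √(n:ℝ))^m := (mul_pow _ _ _).symm
          _ ≤ 3^m := pow_le_pow_left₀ (by positivity) hstep m
        have hb2 : σ^m * (√(k:ℝ))^m ≤ 1 := by
          have hσle : σ ≤ (√(k:ℝ))⁻¹ := by
            have hσe : σ = √(σ^2) := (Real.sqrt_sq hσpos.le).symm
            rw [hσe, ← Real.sqrt_inv]
            exact Real.sqrt_le_sqrt hσk
          calc σ^m * (√(k:ℝ))^m = (σ * √(k:ℝ))^m := (mul_pow _ _ _).symm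
          _ ≤ 1 := by
            apply pow_le_one₀ (by positivity)
            calc σ * √(k:ℝ) ≤ (√(k:ℝ))⁻¹ * √(k:ℝ) :=
                mul_le_mul_of_nonneg_right hσle (Real.sqrt_nonneg _)
            _ = 1 := inv_mul_cancel₀ (by positivity)
        have hb3 : ρ^d * (√(n:ℝ))^m ≤ B/ρ := by
          have hs1 : (√(n:ℝ))^m ≤ (n:ℝ)^m := by
            apply pow_le_pow_left₀ (Real.sqrt_nonneg _)
            have h1n : (1:ℝ) ≤ (n:ℝ) := by exact_mod_cast (by omega : 1 ≤ n)
            calc √(n:ℝ) ≤ √((n:ℝ)^2) := Real.sqrt_le_sqrt (by nlinarith [h1n])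
            _ = (n:ℝ) := Real.sqrt_sq hnposR.le
          have hρn : ρ^n = ρ^d * ρ := by rw [← hdn, pow_succ]
          have heq : ρ^d * (n:ℝ)^m = ((n:ℝ)^m * ρ^n)/ρ := by
            rw [hρn, mul_comm ((n:ℝ)^m) _, mul_assoc, mul_div_assoc,
              mul_div_cancel_left₀ _ hρpos.ne']
          calc ρ^d * (√(n:ℝ))^m ≤ ρ^d * (n:ℝ)^m :=
              mul_le_mul_of_nonneg_left hs1 (by positivity)
          _ = ((n:ℝ)^m * ρ^n)/ρ := heq
          _ ≤ B/ρ := by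
              rw [div_eq_mul_inv, div_eq_mul_inv]
              exact mul_le_mul_of_nonneg_right (hB n) (inv_nonneg.2 hρpos.le)
        have he4 : (2:ℝ) * rexp (1/2) ≤ 4 := by linarith
        have e1 : r0⁻¹^m * ((m.factorial:ℝ) * σ^m * (2*rexp (1/2))) * ((√(n:ℝ))^m * (√(k:ℝ))^m)
            = (r0⁻¹^m * (√(n:ℝ))^m) * ((σ^m * (√(k:ℝ))^m) * ((m.factorial:ℝ) * (2*rexp (1/2)))) := by
          ring
        have e2 : σ^m * ρ^d * ((√(n:ℝ))^m * (√(k:ℝ))^m)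
            = (σ^m * (√(k:ℝ))^m) * (ρ^d * (√(n:ℝ))^m) := by ring
        rw [add_mul, e1, e2]
        have hb4 : (r0⁻¹^m * (√(n:ℝ))^m) * ((σ^m * (√(k:ℝ))^m) * ((m.factorial:ℝ) * (2*rexp (1/2))))
            ≤ 3^m * (1 * ((m.factorial:ℝ) * 4)) := by
          apply mul_le_mul hb1 _ (by positivity) (by positivity)
          apply mul_le_mul hb2 (mul_le_mul_of_nonneg_left he4 (by positivity)) (by positivity)
            (by norm_num)
        have hb5 : (σ^m * (√(k:ℝ))^m) * (ρ^d * (√(n:ℝ))^m) ≤ 1 * (B/ρ) :=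
          mul_le_mul hb2 hb3 (by positivity) (by norm_num)
        linarith [hb4, hb5]
end
end
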